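/- For any partitioned order μ of [n] arising from the integer partition i, the sequence φ(μ) has length lcm(i) and all of its blocks are pairwise distinct; consequently the orbit of φ(μ) under circular shifts has exactly lcm(i) elements. -/

import Mathlib

/-- A partitioned order of `[n]`: a set of pairwise disjoint nonempty lists
of distinct elements of `[n]` whose union is `[n]`. -/
structure PartitionedOrder (n : ℕ) where
  oblocks : Finset (List (Fin n))
  nonempty : ∀ S ∈ oblocks, S ≠ []
  nodup : ∀ S ∈ oblocks, S.Nodup
  disjoint : ∀ S ∈ oblocks, ∀ T ∈ oblocks, S ≠ T → ∀ x, x ∈ S → x ∉ T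
  cover : ∀ x : Fin n, ∃ S ∈ oblocks, x ∈ S

namespace PartitionedOrder

variable {n : ℕ}

/-- The block `W_ℓ = { S_k[ℓ mod n_k] : k }` of the sequential rewriting. -/
def phiBlock (μ : PartitionedOrder n) (ℓ : ℕ) : Finset (Fin n) :=
  μ.oblocks.attach.image (fun S =>
    S.1.get ⟨ℓ % S.1.length,
      Nat.mod_lt _ (List.length_pos_iff.mpr (μ.nonempty S.1 S.2))⟩)

/-- The period `p` of a partitioned order: the lcm of its o-block lengths. -/
def period (μ : PartitionedOrder n) : ℕ := μ.oblocks.lcm List.length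

/-- The sequential rewriting `φ(μ) = (W_0, …, W_{p-1})`. -/
def phi (μ : PartitionedOrder n) : List (Finset (Fin n)) :=
  (List.range μ.period).map μ.phiBlock

end PartitionedOrder

/-- An ordered partition of `[n]` (block-sequential update mode): a sequence of
nonempty pairwise disjoint subsets of `[n]` whose union is `[n]`. -/
def IsOrderedPartition {n : ℕ} (L : List (Finset (Fin n))) : Prop :=
  (∀ W ∈ L, W.Nonempty) ∧ L.Pairwise Disjoint ∧ ∀ x : Fin n, ∃ W ∈ L, x ∈ W

namespace PartitionedOrder

lemma period_pos {n : ℕ} (μ : PartitionedOrder n) : 0 < μ.period := by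
  rw [Nat.pos_iff_ne_zero]
  intro h
  rw [period, Finset.lcm_eq_zero_iff] at h
  obtain ⟨S, hS, hlen⟩ := h
  exact μ.nonempty S hS (List.length_eq_zero_iff.mp hlen)

lemma phiBlock_inj {n : ℕ} (μ : PartitionedOrder n) {a b : ℕ}
    (ha : a < μ.period) (hb : b < μ.period) (h : μ.phiBlock a = μ.phiBlock b) :
    a = b := by
  -- reduce to congruence mod each block length
  have key : ∀ {x y : ℕ}, μ.phiBlock x = μ.phiBlock y → x ≤ y →
      μ.period ∣ y - x := by
    intro x y hxy hle
    refine Finset.lcm_dvd fun S hS => ?_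
    have hlen : 0 < S.length := List.length_pos_iff.mpr (μ.nonempty S hS)
    set e : Fin n := S.get ⟨x % S.length, Nat.mod_lt _ hlen⟩ with he
    have hmem : e ∈ μ.phiBlock x := by
      apply Finset.mem_image.mpr
      exact ⟨⟨S, hS⟩, Finset.mem_attach _ _, rfl⟩
    rw [hxy] at hmem
    obtain ⟨⟨T, hT⟩, -, hTe⟩ := Finset.mem_image.mp hmem
    have heS : e ∈ S := List.get_mem _ _
    have heT : e ∈ T := hTe ▸ List.get_mem _ _
    have hST : S = T := by
      by_contra hne
      exact μ.disjoint S hS T hT hne e heS heT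
    subst hST
    have hget : S.get ⟨y % S.length, Nat.mod_lt _ hlen⟩ =
        S.get ⟨x % S.length, Nat.mod_lt _ hlen⟩ := hTe
    have hmod : y % S.length = x % S.length := by
      have := (List.nodup_iff_injective_get.mp (μ.nodup S hS)) hget
      exact congrArg Fin.val this
    exact (Nat.modEq_iff_dvd' hle).mp hmod.symm
  rcases le_total a b with hle | hle
  · rcases Nat.eq_zero_or_pos (b - a) with h0 | h0
    · omega
    · exact absurd (key h hle) (Nat.not_dvd_of_pos_of_lt h0 (by omega))
  · rcases Nat.eq_zero_or_pos (a - b) with h0 | h0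
    · omega
    · exact absurd (key h.symm hle) (Nat.not_dvd_of_pos_of_lt h0 (by omega))

lemma phi_nodup {n : ℕ} (μ : PartitionedOrder n) : μ.phi.Nodup := by
  refine List.Nodup.map_on ?_ List.nodup_range
  intro x hx y hy hxy
  exact μ.phiBlock_inj (List.mem_range.mp hx) (List.mem_range.mp hy) hxy

end PartitionedOrder


/-- `φ(μ)` has length `lcm(i)` (the lcm of the o-block lengths),
all of its blocks are pairwise distinct, and consequently its orbit under
circular shifts has exactly `lcm(i)` elements. -/
theorem phi_length_nodup_orbit {n : ℕ} (μ : PartitionedOrder n) :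
    μ.phi.length = μ.period ∧ μ.phi.Nodup ∧
    Nat.card {L : List (Finset (Fin n)) // ∃ k, L = μ.phi.rotate k} =
      μ.period := by
  have hlen : μ.phi.length = μ.period := by
    simp [PartitionedOrder.phi]
  have hnd := μ.phi_nodup
  have hpos := μ.period_pos
  have hne : μ.phi ≠ [] := by
    intro h; rw [h] at hlen; simp at hlen; omega
  refine ⟨hlen, hnd, ?_⟩
  have hbij : Function.Bijective
      (fun k : Fin μ.period =>
        (⟨μ.phi.rotate k, k, rfl⟩ :
          {L : List (Finset (Fin n)) // ∃ k, L = μ.phi.rotate k})) := by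
    constructor
    · intro a b hab
      have h : μ.phi.rotate a = μ.phi.rotate b := congrArg Subtype.val hab
      have := hnd.rotate_congr hne a b h
      rw [hlen, Nat.mod_eq_of_lt a.2, Nat.mod_eq_of_lt b.2] at this
      exact Fin.ext this
    · rintro ⟨L, k, rfl⟩
      refine ⟨⟨k % μ.period, Nat.mod_lt _ hpos⟩, ?_⟩
      apply Subtype.ext
      show μ.phi.rotate (k % μ.period) = μ.phi.rotate k
      rw [← hlen, List.rotate_mod]
  rw [Nat.card_eq_of_bijective _ hbij |>.symm, Nat.card_eq_fintype_card,
    Fintype.card_fin]
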